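/- Let q̃*_β : S × A → ℝ satisfy q̃*_β = T*_β q̃*_β and define ṽ*_β(s) = τ log Σ_{a ∈ supp β(·|s)} exp(q̃*_β(s,a)/τ). For a policy π with π ⪯ β and q̃^π = T^π q̃^π, define ṽ^π(s) = Σ_{a ∈ supp π(·|s)} π(a|s) (q̃^π(s,a) − τ log π(a|s)). Then ṽ^π(s) ≤ ṽ*_β(s) for every state s and every π ⪯ β, and equality holds for the in-sample softmax greedy policy π̃*_β(a|s) = exp(q̃*_β(s,a)/τ) / Σ_{a' ∈ supp β(·|s)} exp(q̃*_β(s,a')/τ) on supp β(·|s) (and 0 otherwise); hence ṽ*_β(s) = max_{π ⪯ β} ṽ^π(s) for all s. -/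

import Mathlib

open Finset

/-- The in-sample softmax optimality operator
`(T*_β q)(s,a) = r(s,a) + γ ∑_{s'} P(s,a)(s') · τ log ∑_{a' ∈ supp β(·|s')} exp(q(s',a')/τ)`. -/
noncomputable def Tstar {S A : Type*} [Fintype S] [Fintype A]
    (r : S → A → ℝ) (γ τ : ℝ) (P : S → A → S → ℝ) (β : S → A → ℝ)
    (q : S → A → ℝ) : S → A → ℝ := fun s a =>
  r s a + γ * ∑ s', P s a s' *
    (τ * Real.log (∑ a' ∈ Finset.univ.filter (fun a' => 0 < β s' a'), Real.exp (q s' a' / τ)))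

/-- The on-policy entropy-regularized Bellman operator
`(T^π q)(s,a) = r(s,a) + γ ∑_{s'} P(s,a)(s') ∑_{a' ∈ supp π(·|s')} π(a'|s')(q(s',a') − τ log π(a'|s'))`. -/
noncomputable def Ton {S A : Type*} [Fintype S] [Fintype A]
    (r : S → A → ℝ) (γ τ : ℝ) (P : S → A → S → ℝ) (π : S → A → ℝ)
    (q : S → A → ℝ) : S → A → ℝ := fun s a =>
  r s a + γ * ∑ s', P s a s' *
    (∑ a' ∈ Finset.univ.filter (fun a' => 0 < π s' a'),
      π s' a' * (q s' a' - τ * Real.log (π s' a')))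

lemma sum_filter_pos' {A : Type*} [Fintype A] (p : A → ℝ) (h0 : ∀ a, 0 ≤ p a) :
    ∑ a ∈ Finset.univ.filter (fun a => 0 < p a), p a = ∑ a, p a :=
  Finset.sum_subset (Finset.filter_subset _ _) (fun a _ ha => by
    simp only [Finset.mem_filter, Finset.mem_univ, true_and, not_lt] at ha
    exact le_antisymm ha (h0 a))

lemma gibbs' {A : Type*} [Fintype A] {τ : ℝ} (hτ : 0 < τ) (T : Finset A)
    (p q : A → ℝ) (h0 : ∀ a, 0 ≤ p a)
    (h1 : ∑ a ∈ Finset.univ.filter (fun a => 0 < p a), p a = 1)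
    (hsub : ∀ a, 0 < p a → a ∈ T) :
    ∑ a ∈ Finset.univ.filter (fun a => 0 < p a), p a * (q a - τ * Real.log (p a))
      ≤ τ * Real.log (∑ a ∈ T, Real.exp (q a / τ)) := by
  classical
  set F := Finset.univ.filter (fun a => 0 < p a) with hF
  have hFne : F.Nonempty := by
    rcases Finset.eq_empty_or_nonempty F with h | h
    · rw [h, Finset.sum_empty] at h1; norm_num at h1
    · exact h
  obtain ⟨a₀, ha₀⟩ := hFne
  have hTne : T.Nonempty := ⟨a₀, hsub a₀ (Finset.mem_filter.mp ha₀).2⟩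
  set Z := ∑ a ∈ T, Real.exp (q a / τ) with hZdef
  have hZ : 0 < Z := Finset.sum_pos (fun a _ => Real.exp_pos _) hTne
  have key : ∀ a ∈ F, p a * (q a - τ * Real.log (p a))
      ≤ τ * (Real.exp (q a / τ) / Z) - τ * p a + p a * (τ * Real.log Z) := by
    intro a ha
    have hpa : 0 < p a := (Finset.mem_filter.mp ha).2
    have hx : 0 < Real.exp (q a / τ) / (p a * Z) := by positivity
    have hlog := Real.log_le_sub_one_of_pos hx
    have hexpand : Real.log (Real.exp (q a / τ) / (p a * Z))
        = q a / τ - Real.log (p a) - Real.log Z := by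
      rw [Real.log_div (Real.exp_ne_zero _) (by positivity), Real.log_exp,
        Real.log_mul hpa.ne' hZ.ne']
      ring
    rw [hexpand] at hlog
    have h2 := mul_le_mul_of_nonneg_left hlog (by positivity : (0:ℝ) ≤ τ * p a)
    have h3 : (τ * p a) * (q a / τ - Real.log (p a) - Real.log Z)
        = p a * (q a - τ * Real.log (p a)) - p a * (τ * Real.log Z) := by
      field_simp
    have h4 : (τ * p a) * (Real.exp (q a / τ) / (p a * Z) - 1)
        = τ * (Real.exp (q a / τ) / Z) - τ * p a := by
      field_simp
    rw [h3, h4] at h2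
    linarith
  have hsum := Finset.sum_le_sum key
  have e1 : ∑ a ∈ F, τ * (Real.exp (q a / τ) / Z) = τ * ((∑ a ∈ F, Real.exp (q a / τ)) / Z) := by
    rw [← Finset.mul_sum, ← Finset.sum_div]
  have e2 : ∑ a ∈ F, τ * p a = τ := by rw [← Finset.mul_sum, h1, mul_one]
  have e3 : ∑ a ∈ F, p a * (τ * Real.log Z) = τ * Real.log Z := by
    rw [← Finset.sum_mul, h1, one_mul]
  rw [Finset.sum_add_distrib, Finset.sum_sub_distrib, e1, e2, e3] at hsum
  have hFT : ∑ a ∈ F, Real.exp (q a / τ) ≤ Z := by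
    apply Finset.sum_le_sum_of_subset_of_nonneg
    · intro a ha; exact hsub a (Finset.mem_filter.mp ha).2
    · intro a _ _; exact (Real.exp_pos _).le
  have hdiv : (∑ a ∈ F, Real.exp (q a / τ)) / Z ≤ 1 := (div_le_one hZ).mpr hFT
  nlinarith

/-- The in-sample softmax optimal state value `ṽ*_β` dominates the entropy-regularized state
value `ṽ^π` of every policy `π ⪯ β`, with equality attained by the in-sample softmax greedy
policy `π̃*_β`; hence `ṽ*_β(s) = max_{π ⪯ β} ṽ^π(s)` for all `s`. -/
theorem insample_softmax_value_is_optimal {S A : Type*}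
    [Fintype S] [Fintype A] [Nonempty S] [Nonempty A]
    (r : S → A → ℝ) (γ : ℝ) (hγ0 : 0 ≤ γ) (hγ1 : γ < 1)
    (P : S → A → S → ℝ) (hP0 : ∀ s a s', 0 ≤ P s a s') (hP1 : ∀ s a, (∑ s', P s a s') = 1)
    (τ : ℝ) (hτ : 0 < τ)
    (β : S → A → ℝ) (hβ0 : ∀ s a, 0 ≤ β s a) (hβ1 : ∀ s, (∑ a, β s a) = 1)
    (qstar : S → A → ℝ) (hfix : qstar = Tstar r γ τ P β qstar) :
    let vstar : S → ℝ := fun s =>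
      τ * Real.log (∑ a ∈ Finset.univ.filter (fun a => 0 < β s a), Real.exp (qstar s a / τ))
    let pistar : S → A → ℝ := fun s a =>
      if 0 < β s a then
        Real.exp (qstar s a / τ) /
          ∑ a' ∈ Finset.univ.filter (fun a' => 0 < β s a'), Real.exp (qstar s a' / τ)
      else 0
    let vOf : (S → A → ℝ) → (S → A → ℝ) → S → ℝ := fun π qpi s =>
      ∑ a ∈ Finset.univ.filter (fun a => 0 < π s a), π s a * (qpi s a - τ * Real.log (π s a))
    (∀ (π : S → A → ℝ), (∀ s a, 0 ≤ π s a) → (∀ s, (∑ a, π s a) = 1) →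
      (∀ s a, 0 < π s a → 0 < β s a) →
      ∀ qpi : S → A → ℝ, qpi = Ton r γ τ P π qpi →
      ∀ s, vOf π qpi s ≤ vstar s) ∧
    (∀ qg : S → A → ℝ, qg = Ton r γ τ P pistar qg → ∀ s, vOf pistar qg s = vstar s) ∧
    (∀ s : S, IsGreatest
      {x : ℝ | ∃ (π : S → A → ℝ) (qpi : S → A → ℝ),
        (∀ s' a, 0 ≤ π s' a) ∧ (∀ s', (∑ a, π s' a) = 1) ∧
        (∀ s' a, 0 < π s' a → 0 < β s' a) ∧
        qpi = Ton r γ τ P π qpi ∧ x = vOf π qpi s}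
      (vstar s)) := by
  classical
  intro vstar pistar vOf
  have hvstar : ∀ s, vstar s = τ * Real.log (∑ a ∈ Finset.univ.filter (fun a => 0 < β s a),
      Real.exp (qstar s a / τ)) := fun _ => rfl
  have hvOf : ∀ (π qpi : S → A → ℝ) (s : S), vOf π qpi s
      = ∑ a ∈ Finset.univ.filter (fun a => 0 < π s a),
          π s a * (qpi s a - τ * Real.log (π s a)) := fun _ _ _ => rfl
  have hβex : ∀ s, ∃ a, 0 < β s a := by
    intro s
    by_contra h
    push_neg at h
    have h0 : ∑ a, β s a = 0 := Finset.sum_eq_zero fun a _ => le_antisymm (h a) (hβ0 s a)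
    rw [hβ1 s] at h0; norm_num at h0
  have hFβne : ∀ s, (Finset.univ.filter (fun a => 0 < β s a)).Nonempty := by
    intro s; obtain ⟨a, ha⟩ := hβex s
    exact ⟨a, Finset.mem_filter.mpr ⟨Finset.mem_univ a, ha⟩⟩
  have hZ : ∀ s, 0 < ∑ a ∈ Finset.univ.filter (fun a => 0 < β s a), Real.exp (qstar s a / τ) :=
    fun s => Finset.sum_pos (fun a _ => Real.exp_pos _) (hFβne s)
  have hq : ∀ s a, qstar s a = r s a + γ * ∑ s', P s a s' * vstar s' := by
    intro s a
    conv_lhs => rw [hfix]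
    rfl
  -- main inequality (part 1)
  have main : ∀ (π : S → A → ℝ), (∀ s a, 0 ≤ π s a) → (∀ s, (∑ a, π s a) = 1) →
      (∀ s a, 0 < π s a → 0 < β s a) →
      ∀ qpi : S → A → ℝ, qpi = Ton r γ τ P π qpi → ∀ s, vOf π qpi s ≤ vstar s := by
    intro π hπ0 hπ1 hπβ qpi hqfix
    have hqpi : ∀ s a, qpi s a = r s a + γ * ∑ s', P s a s' * vOf π qpi s' := by
      intro s a
      conv_lhs => rw [hqfix]
      rfl
    have hsupp : ∀ s, ∑ a ∈ Finset.univ.filter (fun a => 0 < π s a), π s a = 1 := by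
      intro s; rw [sum_filter_pos' (π s) (hπ0 s), hπ1 s]
    set M := Finset.univ.sup' Finset.univ_nonempty (fun s => vOf π qpi s - vstar s) with hMdef
    have hdM : ∀ s, vOf π qpi s - vstar s ≤ M := fun s =>
      Finset.le_sup' (fun s => vOf π qpi s - vstar s) (Finset.mem_univ s)
    have hqbound : ∀ s a, qpi s a ≤ qstar s a + γ * M := by
      intro s a
      rw [hqpi s a, hq s a]
      have h3 : ∑ s', P s a s' * vOf π qpi s' ≤ ∑ s', P s a s' * (vstar s' + M) :=
        Finset.sum_le_sum fun s' _ =>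
          mul_le_mul_of_nonneg_left (by linarith [hdM s']) (hP0 s a s')
      have h4 : ∑ s', P s a s' * (vstar s' + M) = (∑ s', P s a s' * vstar s') + M := by
        simp only [mul_add]
        rw [Finset.sum_add_distrib, ← Finset.sum_mul, hP1 s a, one_mul]
      have h5 : ∑ s', P s a s' * vOf π qpi s' ≤ (∑ s', P s a s' * vstar s') + M := by
        linarith
      nlinarith [mul_le_mul_of_nonneg_left h5 hγ0]
    have step : ∀ s, vOf π qpi s ≤ vstar s + γ * M := by
      intro s
      have hg := gibbs' hτ (Finset.univ.filter (fun a => 0 < β s a)) (π s) (qpi s) (hπ0 s)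
        (hsupp s) (fun a hpa => Finset.mem_filter.mpr ⟨Finset.mem_univ a, hπβ s a hpa⟩)
      rw [← hvOf π qpi s] at hg
      have hle : ∑ a ∈ Finset.univ.filter (fun a => 0 < β s a), Real.exp (qpi s a / τ)
          ≤ Real.exp (γ * M / τ)
            * ∑ a ∈ Finset.univ.filter (fun a => 0 < β s a), Real.exp (qstar s a / τ) := by
        rw [Finset.mul_sum]
        refine Finset.sum_le_sum fun a _ => ?_
        rw [← Real.exp_add]
        apply Real.exp_le_exp.mpr
        rw [← add_div]
        have := hqbound s a
        gcongr
        linarith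
      have hpos : 0 < ∑ a ∈ Finset.univ.filter (fun a => 0 < β s a), Real.exp (qpi s a / τ) :=
        Finset.sum_pos (fun a _ => Real.exp_pos _) (hFβne s)
      have hlog := Real.log_le_log hpos hle
      rw [Real.log_mul (Real.exp_ne_zero _) (hZ s).ne', Real.log_exp] at hlog
      have h6 := mul_le_mul_of_nonneg_left hlog hτ.le
      rw [hvstar s]
      have h7 : τ * (γ * M / τ + Real.log (∑ a ∈ Finset.univ.filter (fun a => 0 < β s a),
          Real.exp (qstar s a / τ)))
          = τ * Real.log (∑ a ∈ Finset.univ.filter (fun a => 0 < β s a),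
              Real.exp (qstar s a / τ)) + γ * M := by
        field_simp
        ring
      calc vOf π qpi s
          ≤ τ * Real.log (∑ a ∈ Finset.univ.filter (fun a => 0 < β s a),
              Real.exp (qpi s a / τ)) := hg
        _ ≤ τ * (γ * M / τ + Real.log (∑ a ∈ Finset.univ.filter (fun a => 0 < β s a),
              Real.exp (qstar s a / τ))) := h6
        _ = _ := h7
    obtain ⟨s₀, _, hs₀⟩ := Finset.exists_mem_eq_sup' Finset.univ_nonempty
      (fun s => vOf π qpi s - vstar s)
    have h1 : M = vOf π qpi s₀ - vstar s₀ := hs₀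
    have h2 : M ≤ γ * M := by linarith [step s₀]
    have hM0 : M ≤ 0 := by
      by_contra h
      push_neg at h
      nlinarith
    intro s
    linarith [hdM s, hM0]
  -- pistar facts
  have hpistar : pistar = (fun s a => if 0 < β s a then Real.exp (qstar s a / τ)
      / ∑ a' ∈ Finset.univ.filter (fun a' => 0 < β s a'), Real.exp (qstar s a' / τ)
      else 0) := rfl
  have hπ0' : ∀ s a, 0 ≤ pistar s a := by
    intro s a
    rw [hpistar]
    dsimp only
    split
    · exact div_nonneg (Real.exp_pos _).le (hZ s).le
    · exact le_refl 0
  have hposiff : ∀ s a, (0 < pistar s a ↔ 0 < β s a) := by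
    intro s a
    rw [hpistar]
    dsimp only
    by_cases h : 0 < β s a
    · rw [if_pos h]
      exact iff_of_true (div_pos (Real.exp_pos _) (hZ s)) h
    · rw [if_neg h]
      exact iff_of_false (lt_irrefl 0) h
  have hfiltereq : ∀ s, Finset.univ.filter (fun a => 0 < pistar s a)
      = Finset.univ.filter (fun a => 0 < β s a) := by
    intro s
    apply Finset.filter_congr
    intro a _
    exact hposiff s a
  have hsumF : ∀ s, ∑ a ∈ Finset.univ.filter (fun a => 0 < β s a), pistar s a = 1 := by
    intro s
    have he : ∑ a ∈ Finset.univ.filter (fun a => 0 < β s a), pistar s a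
        = ∑ a ∈ Finset.univ.filter (fun a => 0 < β s a), Real.exp (qstar s a / τ)
          / ∑ a' ∈ Finset.univ.filter (fun a' => 0 < β s a'), Real.exp (qstar s a' / τ) := by
      refine Finset.sum_congr rfl fun a ha => ?_
      rw [hpistar]
      dsimp only
      rw [if_pos (Finset.mem_filter.mp ha).2]
    rw [he, ← Finset.sum_div, div_self (hZ s).ne']
  have hπ1' : ∀ s, ∑ a, pistar s a = 1 := by
    intro s
    rw [← sum_filter_pos' (pistar s) (hπ0' s), hfiltereq s, hsumF s]
  have hπβ' : ∀ s a, 0 < pistar s a → 0 < β s a := fun s a h => (hposiff s a).mp h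
  have hlogpistar : ∀ s a, 0 < β s a → τ * Real.log (pistar s a) = qstar s a - vstar s := by
    intro s a h
    rw [hpistar]
    dsimp only
    rw [if_pos h, Real.log_div (Real.exp_ne_zero _) (hZ s).ne', Real.log_exp, hvstar s]
    field_simp
  have hvOfpi : ∀ (qg : S → A → ℝ) (s : S), vOf pistar qg s
      = (∑ a ∈ Finset.univ.filter (fun a => 0 < β s a), pistar s a * (qg s a - qstar s a))
        + vstar s := by
    intro qg s
    rw [hvOf, hfiltereq s]
    have he : ∀ a ∈ Finset.univ.filter (fun a => 0 < β s a),
        pistar s a * (qg s a - τ * Real.log (pistar s a))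
          = pistar s a * (qg s a - qstar s a) + pistar s a * vstar s := by
      intro a ha
      rw [hlogpistar s a (Finset.mem_filter.mp ha).2]
      ring
    rw [Finset.sum_congr rfl he, Finset.sum_add_distrib, ← Finset.sum_mul, hsumF s, one_mul]
  have hvOfqstar : ∀ s, vOf pistar qstar s = vstar s := by
    intro s
    rw [hvOfpi]
    simp
  have hqstar_fix : qstar = Ton r γ τ P pistar qstar := by
    funext s a
    have hT : Ton r γ τ P pistar qstar s a
        = r s a + γ * ∑ s', P s a s' * vOf pistar qstar s' := rfl
    rw [hT]
    simp only [hvOfqstar]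
    exact hq s a
  -- part 2
  have part2 : ∀ qg : S → A → ℝ, qg = Ton r γ τ P pistar qg → ∀ s, vOf pistar qg s = vstar s := by
    intro qg hqg
    have hub := main pistar hπ0' hπ1' hπβ' qg hqg
    have hqgdef : ∀ s a, qg s a = r s a + γ * ∑ s', P s a s' * vOf pistar qg s' := by
      intro s a
      conv_lhs => rw [hqg]
      rfl
    set m := Finset.univ.inf' Finset.univ_nonempty (fun s => vOf pistar qg s - vstar s) with hm
    have hdm : ∀ s, m ≤ vOf pistar qg s - vstar s := fun s =>
      Finset.inf'_le (fun s => vOf pistar qg s - vstar s) (Finset.mem_univ s)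
    have hqdiff : ∀ s a, qstar s a + γ * m ≤ qg s a := by
      intro s a
      rw [hqgdef s a, hq s a]
      have h3 : ∑ s', P s a s' * (vstar s' + m) ≤ ∑ s', P s a s' * vOf pistar qg s' :=
        Finset.sum_le_sum fun s' _ =>
          mul_le_mul_of_nonneg_left (by linarith [hdm s']) (hP0 s a s')
      have h4 : ∑ s', P s a s' * (vstar s' + m) = (∑ s', P s a s' * vstar s') + m := by
        simp only [mul_add]
        rw [Finset.sum_add_distrib, ← Finset.sum_mul, hP1 s a, one_mul]
      have h5 : (∑ s', P s a s' * vstar s') + m ≤ ∑ s', P s a s' * vOf pistar qg s' := by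
        linarith
      nlinarith [mul_le_mul_of_nonneg_left h5 hγ0]
    have hstep : ∀ s, vstar s + γ * m ≤ vOf pistar qg s := by
      intro s
      rw [hvOfpi qg s]
      have h6 : ∀ a ∈ Finset.univ.filter (fun a => 0 < β s a),
          pistar s a * (γ * m) ≤ pistar s a * (qg s a - qstar s a) := fun a _ =>
        mul_le_mul_of_nonneg_left (by linarith [hqdiff s a]) (hπ0' s a)
      have h7 := Finset.sum_le_sum h6
      rw [← Finset.sum_mul, hsumF s, one_mul] at h7
      linarith [h7]
    obtain ⟨s₀, _, hs₀⟩ := Finset.exists_mem_eq_inf' Finset.univ_nonempty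
      (fun s => vOf pistar qg s - vstar s)
    have h1 : m = vOf pistar qg s₀ - vstar s₀ := hs₀
    have h2 : γ * m ≤ m := by linarith [hstep s₀]
    have hm0 : 0 ≤ m := by
      by_contra h
      push_neg at h
      nlinarith
    intro s
    exact le_antisymm (hub s) (by linarith [hdm s])
  refine ⟨main, part2, ?_⟩
  intro s
  constructor
  · exact ⟨pistar, qstar, hπ0', hπ1', hπβ', hqstar_fix, (hvOfqstar s).symm⟩
  · rintro x ⟨π, qpi, h1, h2, h3, h4, rfl⟩
    exact main π h1 h2 h3 qpi h4 s
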